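/- arXiv:1103.5277 — 3 statements merged into one kernel-verified Lean document; each statement's English description precedes it below -/
import Mathlib

section
/- For constants δ > 0, c ≠ 0, ρ > (c²/δ)^{1/4}, and θ ∈ ℝ, the function φ(x) = ρ·√(cos²(√δ·x + θ) + (c²/(δρ⁴))·sin²(√δ·x + θ)) is a solution of the second-order ODE R'' + δR - c²/R³ = 0 on ℝ. -/
open Real

/-- The explicit function φ solves the singular oscillator R'' + δR - c²/R³ = 0. -/
theorem stmt0 (δ c ρ θ : ℝ) (hδ : 0 < δ) (hc : c ≠ 0)
    (hρ : (c ^ 2 / δ) ^ ((1 : ℝ) / 4) < ρ)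
    (φ : ℝ → ℝ)
    (hφ : ∀ x, φ x = ρ * Real.sqrt ((Real.cos (Real.sqrt δ * x + θ)) ^ 2 +
      (c ^ 2 / (δ * ρ ^ 4)) * (Real.sin (Real.sqrt δ * x + θ)) ^ 2)) :
    ∀ x : ℝ, deriv (deriv φ) x + δ * φ x - c ^ 2 / (φ x) ^ 3 = 0 := by
  have hφeq : φ = fun x => ρ * Real.sqrt ((Real.cos (Real.sqrt δ * x + θ)) ^ 2 +
      (c ^ 2 / (δ * ρ ^ 4)) * (Real.sin (Real.sqrt δ * x + θ)) ^ 2) := funext hφ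
  subst hφeq
  set ω := Real.sqrt δ with hω
  have hω2 : ω ^ 2 = δ := Real.sq_sqrt hδ.le
  have hωpos : 0 < ω := Real.sqrt_pos.mpr hδ
  set k := c ^ 2 / (δ * ρ ^ 4) with hk
  have hρ0 : 0 < ρ := lt_trans (Real.rpow_pos_of_pos (div_pos (by positivity) hδ) _) hρ
  have hkpos : 0 < k := by
    have : 0 < c ^ 2 := by positivity
    exact div_pos this (by positivity)
  have hc2 : c ^ 2 = k * (δ * ρ ^ 4) := by
    rw [hk]; field_simp
  set g : ℝ → ℝ := fun x => (Real.cos (ω * x + θ)) ^ 2 + k * (Real.sin (ω * x + θ)) ^ 2 with hgdef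
  have hgpos : ∀ x, 0 < g x := by
    intro x
    have h1 := Real.sin_sq_add_cos_sq (ω * x + θ)
    have h2 : 0 ≤ (Real.cos (ω * x + θ))^2 := sq_nonneg _
    have h3 : 0 ≤ (Real.sin (ω * x + θ))^2 := sq_nonneg _
    simp only [hgdef]
    nlinarith [mul_nonneg hkpos.le h3]
  have hu : ∀ x : ℝ, HasDerivAt (fun y => ω * y + θ) ω x := by
    intro x
    simpa using ((hasDerivAt_id x).const_mul ω).add_const θ
  have hg' : ∀ x : ℝ, HasDerivAt g (2*ω*(k-1)*Real.sin (ω*x+θ)*Real.cos (ω*x+θ)) x := by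
    intro x
    have hcos : HasDerivAt (fun y => Real.cos (ω*y+θ)) (-Real.sin (ω*x+θ) * ω) x :=
      (Real.hasDerivAt_cos _).comp x (hu x)
    have hsin : HasDerivAt (fun y => Real.sin (ω*y+θ)) (Real.cos (ω*x+θ) * ω) x :=
      (Real.hasDerivAt_sin _).comp x (hu x)
    have := (hcos.pow 2).add ((hsin.pow 2).const_mul k)
    refine this.congr_deriv ?_
    push_cast
    ring
  have hsq : ∀ x : ℝ, HasDerivAt (fun y => Real.sqrt (g y))
      (2*ω*(k-1)*Real.sin (ω*x+θ)*Real.cos (ω*x+θ) / (2 * Real.sqrt (g x))) x := by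
    intro x
    have := (Real.hasDerivAt_sqrt (ne_of_gt (hgpos x))).comp x (hg' x)
    refine this.congr_deriv ?_
    ring
  have hφ1 : ∀ x : ℝ, HasDerivAt (fun y => ρ * Real.sqrt (g y))
      (ρ * (2*ω*(k-1)*Real.sin (ω*x+θ)*Real.cos (ω*x+θ)) / (2 * Real.sqrt (g x))) x := by
    intro x
    have := (hsq x).const_mul ρ
    refine this.congr_deriv ?_
    ring
  have hderiv1 : deriv (fun y => ρ * Real.sqrt (g y)) =
      fun x => ρ * (2*ω*(k-1)*Real.sin (ω*x+θ)*Real.cos (ω*x+θ)) / (2 * Real.sqrt (g x)) :=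
    funext fun x => (hφ1 x).deriv
  intro x
  have hsqx : 0 < Real.sqrt (g x) := Real.sqrt_pos.mpr (hgpos x)
  have hN : HasDerivAt (fun y => ρ * (2*ω*(k-1)*Real.sin (ω*y+θ)*Real.cos (ω*y+θ)))
      (ρ * (2*ω^2*(k-1)*((Real.cos (ω*x+θ))^2 - (Real.sin (ω*x+θ))^2))) x := by
    have hcos : HasDerivAt (fun y => Real.cos (ω*y+θ)) (-Real.sin (ω*x+θ) * ω) x :=
      (Real.hasDerivAt_cos _).comp x (hu x)
    have hsin : HasDerivAt (fun y => Real.sin (ω*y+θ)) (Real.cos (ω*x+θ) * ω) x :=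
      (Real.hasDerivAt_sin _).comp x (hu x)
    have h := (hsin.mul hcos).const_mul (ρ * (2*ω*(k-1)))
    have heq : (fun y => ρ * (2*ω*(k-1)) * (Real.sin (ω*y+θ) * Real.cos (ω*y+θ)))
        = (fun y => ρ * (2*ω*(k-1)*Real.sin (ω*y+θ)*Real.cos (ω*y+θ))) := by
      funext y; ring
    simp only [Pi.mul_apply] at h
    rw [heq] at h
    refine h.congr_deriv ?_
    ring
  have hD : HasDerivAt (fun y => 2 * Real.sqrt (g y))
      (2 * (2*ω*(k-1)*Real.sin (ω*x+θ)*Real.cos (ω*x+θ) / (2 * Real.sqrt (g x)))) x :=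
    (hsq x).const_mul 2
  have hDne : 2 * Real.sqrt (g x) ≠ 0 := by positivity
  have h2 : HasDerivAt (fun y => ρ * (2*ω*(k-1)*Real.sin (ω*y+θ)*Real.cos (ω*y+θ)) / (2 * Real.sqrt (g y)))
      ((ρ * (2*ω^2*(k-1)*((Real.cos (ω*x+θ))^2 - (Real.sin (ω*x+θ))^2)) * (2 * Real.sqrt (g x)) -
        ρ * (2*ω*(k-1)*Real.sin (ω*x+θ)*Real.cos (ω*x+θ)) *
          (2 * (2*ω*(k-1)*Real.sin (ω*x+θ)*Real.cos (ω*x+θ) / (2 * Real.sqrt (g x))))) /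
        (2 * Real.sqrt (g x))^2) x := hN.div hD hDne
  rw [hderiv1, h2.deriv]
  beta_reduce
  rw [show (Real.cos (ω*x+θ))^2 + k * (Real.sin (ω*x+θ))^2 = g x from rfl]
  set S := Real.sin (ω*x+θ) with hSdef
  set C := Real.cos (ω*x+θ) with hCdef
  set s := Real.sqrt (g x) with hs
  have hs2 : s ^ 2 = C ^ 2 + k * S ^ 2 := Real.sq_sqrt (hgpos x).le
  have h1 : S ^ 2 + C ^ 2 = 1 := Real.sin_sq_add_cos_sq _
  have hsne : s ≠ 0 := ne_of_gt hsqx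
  have hρne : ρ ≠ 0 := ne_of_gt hρ0
  clear_value k s S C
  have key : (k-1)*(C^2-S^2)*s^2 - (k-1)^2*S^2*C^2 + s^4 - k = 0 := by
    linear_combination (k*(C^2+S^2+1)) * h1 + ((k-1)*(C^2-S^2)+s^2+C^2+k*S^2) * hs2
  have hfac :
      (ρ * (2*ω^2*(k-1)*(C^2 - S^2)) * (2 * s) -
        ρ * (2*ω*(k-1)*S*C) * (2 * (2*ω*(k-1)*S*C / (2 * s)))) / (2 * s)^2
      + δ * (ρ * s) - c ^ 2 / (ρ * s) ^ 3
      = ρ * ω^2 / s^3 * ((k-1)*(C^2-S^2)*s^2 - (k-1)^2*S^2*C^2 + s^4 - k) := by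
    rw [hc2, ← hω2]
    field_simp
  rw [hfac, key, mul_zero]
end

section
/- For the explicit solution φ(x) = ρ·√(cos²(√δ·x+θ) + (c²/(δρ⁴))·sin²(√δ·x+θ)) with δ > 0, c ≠ 0, ρ > (c²/δ)^{1/4}, the conserved energy (1/2)(φ')² + δφ²/2 + c²/(2φ²) equals V(ρ) = δρ²/2 + c²/(2ρ²) for all x. -/
open Real

set_option maxHeartbeats 1000000 in
/-- The conserved energy of the explicit solution φ equals V(ρ) = δρ²/2 + c²/(2ρ²). -/
theorem stmt3 (δ c ρ θ : ℝ) (hδ : 0 < δ) (hc : c ≠ 0)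
    (hρ : (c ^ 2 / δ) ^ ((1 : ℝ) / 4) < ρ)
    (φ : ℝ → ℝ)
    (hφ : ∀ x, φ x = ρ * Real.sqrt ((Real.cos (Real.sqrt δ * x + θ)) ^ 2 +
      (c ^ 2 / (δ * ρ ^ 4)) * (Real.sin (Real.sqrt δ * x + θ)) ^ 2)) :
    ∀ x : ℝ, (1 / 2) * (deriv φ x) ^ 2 + δ * (φ x) ^ 2 / 2 + c ^ 2 / (2 * (φ x) ^ 2)
      = δ * ρ ^ 2 / 2 + c ^ 2 / (2 * ρ ^ 2) := by
  intro x
  have hρ0 : 0 < ρ := lt_of_le_of_lt (Real.rpow_nonneg (by positivity) _) hρ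
  have hk0 : 0 < c ^ 2 / (δ * ρ ^ 4) := by positivity
  have pyth : Real.sin (Real.sqrt δ * x + θ) ^ 2 + Real.cos (Real.sqrt δ * x + θ) ^ 2 = 1 :=
    Real.sin_sq_add_cos_sq _
  have hfx : 0 < (Real.cos (Real.sqrt δ * x + θ)) ^ 2 +
      (c ^ 2 / (δ * ρ ^ 4)) * (Real.sin (Real.sqrt δ * x + θ)) ^ 2 := by
    nlinarith [sq_nonneg (Real.sin (Real.sqrt δ * x + θ)),
      sq_nonneg (Real.cos (Real.sqrt δ * x + θ)),
      mul_nonneg hk0.le (sq_nonneg (Real.sin (Real.sqrt δ * x + θ)))]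
  have hinner : HasDerivAt (fun y : ℝ => Real.sqrt δ * y + θ) (Real.sqrt δ) x := by
    simpa using ((hasDerivAt_id x).const_mul (Real.sqrt δ)).add_const θ
  have hcos : HasDerivAt (fun y : ℝ => Real.cos (Real.sqrt δ * y + θ))
      (-Real.sin (Real.sqrt δ * x + θ) * Real.sqrt δ) x :=
    (Real.hasDerivAt_cos _).comp x hinner
  have hsin : HasDerivAt (fun y : ℝ => Real.sin (Real.sqrt δ * y + θ))
      (Real.cos (Real.sqrt δ * x + θ) * Real.sqrt δ) x :=
    (Real.hasDerivAt_sin _).comp x hinner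
  have hf : HasDerivAt (fun y : ℝ => (Real.cos (Real.sqrt δ * y + θ)) ^ 2 +
      (c ^ 2 / (δ * ρ ^ 4)) * (Real.sin (Real.sqrt δ * y + θ)) ^ 2)
      (2 * Real.cos (Real.sqrt δ * x + θ) ^ 1 * (-Real.sin (Real.sqrt δ * x + θ) * Real.sqrt δ)
        + c ^ 2 / (δ * ρ ^ 4) * (2 * Real.sin (Real.sqrt δ * x + θ) ^ 1 *
          (Real.cos (Real.sqrt δ * x + θ) * Real.sqrt δ))) x :=
    (hcos.pow 2).add ((hsin.pow 2).const_mul _)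
  obtain ⟨S, hS⟩ : ∃ S : ℝ, S = Real.sqrt ((Real.cos (Real.sqrt δ * x + θ)) ^ 2 +
      (c ^ 2 / (δ * ρ ^ 4)) * (Real.sin (Real.sqrt δ * x + θ)) ^ 2) := ⟨_, rfl⟩
  have hS0 : 0 < S := hS ▸ Real.sqrt_pos.mpr hfx
  have hS2 : S ^ 2 = (Real.cos (Real.sqrt δ * x + θ)) ^ 2 +
      (c ^ 2 / (δ * ρ ^ 4)) * (Real.sin (Real.sqrt δ * x + θ)) ^ 2 := by
    rw [hS]; exact Real.sq_sqrt hfx.le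
  have hφ' : HasDerivAt φ
      (ρ * ((2 * Real.cos (Real.sqrt δ * x + θ) ^ 1 * (-Real.sin (Real.sqrt δ * x + θ) * Real.sqrt δ)
        + c ^ 2 / (δ * ρ ^ 4) * (2 * Real.sin (Real.sqrt δ * x + θ) ^ 1 *
          (Real.cos (Real.sqrt δ * x + θ) * Real.sqrt δ))) / (2 * S))) x := by
    rw [hS]
    have h := (hf.sqrt hfx.ne').const_mul ρ
    refine h.congr_of_eventuallyEq ?_
    filter_upwards with y
    rw [hφ y]
  have hd := hφ'.deriv
  have hφx : φ x = ρ * S := by rw [hφ x, hS]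
  have hq2 : Real.sqrt δ ^ 2 = δ := Real.sq_sqrt hδ.le
  have hSne : S ≠ 0 := hS0.ne'
  have hρne : ρ ≠ 0 := hρ0.ne'
  have hδne : δ ≠ 0 := hδ.ne'
  rw [hd, hφx]
  field_simp
  ring_nf
  have hS2'' : δ * ρ ^ 4 * S ^ 2 = δ * ρ ^ 4 * Real.cos (Real.sqrt δ * x + θ) ^ 2
      + c ^ 2 * Real.sin (Real.sqrt δ * x + θ) ^ 2 := by
    rw [hS2]; field_simp
  linear_combination
    (Real.cos (Real.sqrt δ * x + θ) ^ 2 * Real.sin (Real.sqrt δ * x + θ) ^ 2 * ((δ * ρ ^ 4) - c ^ 2) ^ 2) * hq2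
    + (δ * ((δ * ρ ^ 4) * S ^ 2 + (δ * ρ ^ 4) * Real.cos (Real.sqrt δ * x + θ) ^ 2 + c ^ 2 * Real.sin (Real.sqrt δ * x + θ) ^ 2 - c ^ 2 - (δ * ρ ^ 4))) * hS2''
    + (δ * (Real.sin (Real.sqrt δ * x + θ) ^ 2 * (c ^ 2 - (δ * ρ ^ 4)) * c ^ 2 + (δ * ρ ^ 4) * Real.cos (Real.sqrt δ * x + θ) ^ 2 * ((δ * ρ ^ 4) - c ^ 2)
        + (δ * ρ ^ 4) * c ^ 2 * (Real.sin (Real.sqrt δ * x + θ) ^ 2 + Real.cos (Real.sqrt δ * x + θ) ^ 2 - 1))) * pyth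
end

section
/- Let δ > 0, c ≠ 0, and fix ρ > (c²/δ)^{1/4}. Define R(θ) = ρ√(cos²θ + (c²/(δρ⁴))sin²θ) and S(θ) = ρ√δ(c²/(δρ⁴) - 1)·cosθ sinθ/√(cos²θ + (c²/(δρ⁴))sin²θ). Then for every θ ∈ ℝ, the identity (1/2)S(θ)² + (δ/2)R(θ)² + c²/(2R(θ)²) = (δ/2)ρ² + c²/(2ρ²) holds. -/
open Real

/-- The averaging transformation maps circles {ρ = const} onto level sets of the
Hamiltonian: (1/2)S(θ)² + (δ/2)R(θ)² + c²/(2R(θ)²) = (δ/2)ρ² + c²/(2ρ²). -/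
theorem stmt18 (δ c ρ : ℝ) (hδ : 0 < δ) (hc : c ≠ 0)
    (hρ : (c ^ 2 / δ) ^ ((1 : ℝ) / 4) < ρ)
    (R S : ℝ → ℝ)
    (hR : ∀ θ, R θ = ρ * Real.sqrt ((Real.cos θ) ^ 2 +
      (c ^ 2 / (δ * ρ ^ 4)) * (Real.sin θ) ^ 2))
    (hS : ∀ θ, S θ = ρ * Real.sqrt δ * (c ^ 2 / (δ * ρ ^ 4) - 1) * Real.cos θ * Real.sin θ /
      Real.sqrt ((Real.cos θ) ^ 2 + (c ^ 2 / (δ * ρ ^ 4)) * (Real.sin θ) ^ 2)) :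
    ∀ θ : ℝ, (1 / 2) * (S θ) ^ 2 + (δ / 2) * (R θ) ^ 2 + c ^ 2 / (2 * (R θ) ^ 2)
      = (δ / 2) * ρ ^ 2 + c ^ 2 / (2 * ρ ^ 2) := by
  intro θ
  have hρ0 : 0 < ρ := lt_trans (Real.rpow_pos_of_pos (by positivity) _) hρ
  have hρne : ρ ≠ 0 := hρ0.ne'
  set k : ℝ := c ^ 2 / (δ * ρ ^ 4) with hk
  have hk0 : 0 < k := by positivity
  have hcc : c ^ 2 = k * (δ * ρ ^ 4) := by rw [hk, div_mul_cancel₀]; positivity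
  clear_value k
  clear hk
  have hpyth : Real.sin θ ^ 2 + Real.cos θ ^ 2 = 1 := Real.sin_sq_add_cos_sq θ
  set a : ℝ := Real.cos θ with ha
  set b : ℝ := Real.sin θ with hb
  have hQ : 0 < a ^ 2 + k * b ^ 2 := by
    nlinarith [sq_nonneg a, sq_nonneg b, mul_nonneg hk0.le (sq_nonneg b)]
  set Q : ℝ := a ^ 2 + k * b ^ 2 with hQdef
  have h1 : Real.sqrt Q ^ 2 = Q := Real.sq_sqrt hQ.le
  have h2 : Real.sqrt δ ^ 2 = δ := Real.sq_sqrt hδ.le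
  have hQne : Real.sqrt Q ≠ 0 := (Real.sqrt_pos.mpr hQ).ne'
  have key : (k - 1) ^ 2 * a ^ 2 * b ^ 2 + Q ^ 2 + k = Q * (1 + k) := by
    rw [hQdef]
    linear_combination (a ^ 2 + k ^ 2 * b ^ 2 - k) * hpyth
  have hnum : (ρ * Real.sqrt δ * (k - 1) * a * b) ^ 2
      = ρ ^ 2 * δ * (k - 1) ^ 2 * a ^ 2 * b ^ 2 := by
    linear_combination (ρ * (k - 1) * a * b) ^ 2 * h2
  have eS : (S θ) ^ 2 = ρ ^ 2 * δ * (k - 1) ^ 2 * a ^ 2 * b ^ 2 / Q := by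
    rw [hS, ← ha, ← hb, ← hQdef, div_pow, h1, hnum]
  have eR : (R θ) ^ 2 = ρ ^ 2 * Q := by
    rw [hR, ← ha, ← hb, ← hQdef, mul_pow, h1]
  clear_value Q
  rw [eS, eR, hcc]
  have hQ0 : Q ≠ 0 := hQ.ne'
  calc (1 / 2) * (ρ ^ 2 * δ * (k - 1) ^ 2 * a ^ 2 * b ^ 2 / Q) + δ / 2 * (ρ ^ 2 * Q)
        + k * (δ * ρ ^ 4) / (2 * (ρ ^ 2 * Q))
      = (δ * ρ ^ 2 / (2 * Q)) * ((k - 1) ^ 2 * a ^ 2 * b ^ 2 + Q ^ 2 + k) := by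
        field_simp
    _ = (δ * ρ ^ 2 / (2 * Q)) * (Q * (1 + k)) := by rw [key]
    _ = δ / 2 * ρ ^ 2 + k * (δ * ρ ^ 4) / (2 * ρ ^ 2) := by
        field_simp
end
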